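/- Let α be a countable ordinal and let V be a nonempty countable bounded binary tree of height α+1 which is healthy. Then every nonempty countable bounded binary tree T of height ≤ α+1 is isomorphic to a closed initial segment of V; that is, there is a meet-semilattice embedding of T into V whose image is a closed initial segment of V. -/

import Mathlib

/-! Trees: partially ordered sets which are meet-semilattices with well-ordered sets of
predecessors. We work with a type `T` carrying a `SemilatticeInf` instance together with the
assumption that `{x | x < t}` is well-ordered for each `t`. -/

/-- The height of an element of a tree: the order type of its set of predecessors. -/
noncomputable def treeHt {T : Type} [SemilatticeInf T]
    [∀ t : T, IsWellOrder {x : T // x < t} (· < ·)] (t : T) : Ordinal :=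
  Ordinal.type ((· < ·) : {x : T // x < t} → {x : T // x < t} → Prop)

/-- The height of a tree: the least ordinal strictly greater than the heights of all of its
elements. -/
noncomputable def treeHeight (T : Type) [SemilatticeInf T]
    [∀ t : T, IsWellOrder {x : T // x < t} (· < ·)] : Ordinal :=
  Ordinal.lsub fun t : T => treeHt t

/-- `s` is an immediate successor of `t`. -/
def ImmSucc {T : Type} [Preorder T] (t s : T) : Prop :=
  t < s ∧ ∀ x : T, t < x → x < s → False

/-- A tree is binary if every element has at most two immediate successors. -/
def BinaryOrderTree (T : Type) [Preorder T] : Prop :=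
  ∀ t a b c : T, ImmSucc t a → ImmSucc t b → ImmSucc t c → a = b ∨ a = c ∨ b = c

/-- A tree is bounded if every element lies below some maximal element. -/
def BoundedTree (T : Type) [Preorder T] : Prop :=
  ∀ x : T, ∃ t : T, x ≤ t ∧ IsMax t

/-- A closed initial segment: a downward-closed subset containing the suprema of all chains
contained in it. -/
def ClosedInitialSegment {T : Type} [Preorder T] (A : Set T) : Prop :=
  IsLowerSet A ∧ ∀ C : Set T, C ⊆ A → IsChain (· ≤ ·) C → ∀ s : T, IsLUB C s → s ∈ A

/-- A tree is healthy if every non-maximal element has at least two immediate successors,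
and above every element there are elements of arbitrarily large height below the height of
the tree. -/
def HealthyTree (T : Type) [SemilatticeInf T]
    [∀ t : T, IsWellOrder {x : T // x < t} (· < ·)] : Prop :=
  (∀ t : T, ¬IsMax t → ∃ a b : T, a ≠ b ∧ ImmSucc t a ∧ ImmSucc t b) ∧
  (∀ t : T, ∀ β : Ordinal, β < treeHeight T → ∃ s : T, t ≤ s ∧ β ≤ treeHt s)

/-- A meet-semilattice embedding: an order-embedding preserving binary infima. -/
def InfEmbedding {T V : Type} [SemilatticeInf T] [SemilatticeInf V] (f : T → V) : Prop :=
  (∀ a b : T, f a ≤ f b ↔ a ≤ b) ∧ ∀ a b : T, f (a ⊓ b) = f a ⊓ f b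

set_option linter.unusedSectionVars false

section Basics
variable {X : Type} [SemilatticeInf X] [∀ t : X, IsWellOrder {x : X // x < t} (· < ·)]

lemma tree_comp {x y t : X} (hx : x ≤ t) (hy : y ≤ t) : x ≤ y ∨ y ≤ x := by
  rcases eq_or_lt_of_le hx with rfl | hx
  · exact Or.inr hy
  rcases eq_or_lt_of_le hy with rfl | hy
  · exact Or.inl hx.le
  rcases @trichotomous _ (· < ·) _ (⟨x, hx⟩ : {z : X // z < t}) ⟨y, hy⟩ with h | h | h
  · exact Or.inl (le_of_lt (Subtype.mk_lt_mk.1 h))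
  · exact Or.inl (le_of_eq (congrArg Subtype.val h))
  · exact Or.inr (le_of_lt (Subtype.mk_lt_mk.1 h))

/-- the principal segment from predecessors of `x` into predecessors of `y` -/
noncomputable def predSeg {x y : X} (h : x < y) :
    @PrincipalSeg {z : X // z < x} {z : X // z < y} (· < ·) (· < ·) where
  toRelEmbedding := ⟨⟨fun z => ⟨z.1, lt_trans z.2 h⟩, by
      intro a b hab
      simpa [Subtype.ext_iff] using Subtype.ext_iff.1 hab⟩, by
      intro a b
      exact Iff.rfl⟩
  top := ⟨x, h⟩
  mem_range_iff_rel' := by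
    rintro ⟨b, hb⟩
    constructor
    · rintro ⟨⟨a, ha⟩, he⟩
      have : a = b := congrArg Subtype.val he
      subst this
      exact Subtype.mk_lt_mk.2 ha
    · intro hlt
      exact ⟨⟨b, Subtype.mk_lt_mk.1 hlt⟩, rfl⟩

lemma treeHt_lt_of_lt {x y : X} (h : x < y) : treeHt x < treeHt y :=
  (predSeg h).ordinal_type_lt

lemma treeHt_le_of_le {x y : X} (h : x ≤ y) : treeHt x ≤ treeHt y := by
  rcases eq_or_lt_of_le h with rfl | h
  · exact le_rfl
  · exact (treeHt_lt_of_lt h).le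

lemma le_of_comp_ht_le {x y t : X} (hx : x ≤ t) (hy : y ≤ t) (h : treeHt x ≤ treeHt y) :
    x ≤ y := by
  rcases tree_comp hx hy with h' | h'
  · exact h'
  rcases eq_or_lt_of_le h' with rfl | h'
  · exact le_rfl
  · exact absurd (treeHt_lt_of_lt h') (not_lt.2 h)

lemma eq_of_comp_ht_eq {x y t : X} (hx : x ≤ t) (hy : y ≤ t) (h : treeHt x = treeHt y) :
    x = y :=
  le_antisymm (le_of_comp_ht_le hx hy h.le) (le_of_comp_ht_le hy hx h.ge)
end Basics

section Cut
variable {X : Type} [SemilatticeInf X] [∀ t : X, IsWellOrder {x : X // x < t} (· < ·)]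

lemma treeHt_eq_typein {t : X} (x : {z : X // z < t}) :
    treeHt x.1 = Ordinal.typein ((· < ·) : {z : X // z < t} → {z : X // z < t} → Prop) x := by
  rw [← Ordinal.type_subrel]
  refine RelIso.ordinal_type_eq ⟨Equiv.mk
    (fun z => ⟨⟨z.1, lt_trans z.2 x.2⟩, Subtype.coe_lt_coe.1 z.2⟩)
    (fun b => ⟨b.1.1, Subtype.coe_lt_coe.2 b.2⟩)
    ?_ ?_, ?_⟩
  · intro z; rfl
  · intro b; ext; rfl
  · intro a b
    exact Iff.trans (by exact Subtype.coe_lt_coe) Subtype.coe_lt_coe.symm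

lemma exists_le_ht (t : X) {β : Ordinal} (hβ : β ≤ treeHt t) :
    ∃ x : X, x ≤ t ∧ treeHt x = β := by
  rcases eq_or_lt_of_le hβ with rfl | hβ
  · exact ⟨t, le_rfl, rfl⟩
  · rcases Ordinal.typein_surj ((· < ·) : {z : X // z < t} → {z : X // z < t} → Prop) hβ with
      ⟨a, ha⟩
    exact ⟨a.1, a.2.le, (treeHt_eq_typein a).trans ha⟩

/-- `cut t β` : the unique element of height `β` below `t` (junk if `β > treeHt t`). -/
noncomputable def cut (t : X) (β : Ordinal) : X :=
  if h : β ≤ treeHt t then (exists_le_ht t h).choose else t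

lemma cut_le {t : X} {β : Ordinal} (h : β ≤ treeHt t) : cut t β ≤ t := by
  rw [cut, dif_pos h]; exact (exists_le_ht t h).choose_spec.1

lemma treeHt_cut {t : X} {β : Ordinal} (h : β ≤ treeHt t) : treeHt (cut t β) = β := by
  rw [cut, dif_pos h]; exact (exists_le_ht t h).choose_spec.2

lemma cut_unique {t x : X} {β : Ordinal} (h : β ≤ treeHt t) (hx : x ≤ t)
    (hht : treeHt x = β) : x = cut t β :=
  eq_of_comp_ht_eq hx (cut_le h) (by rw [hht, treeHt_cut h])

lemma cut_self {t : X} : cut t (treeHt t) = t :=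
  (cut_unique le_rfl le_rfl rfl).symm

end Cut

section Succ
variable {X : Type} [SemilatticeInf X] [∀ t : X, IsWellOrder {x : X // x < t} (· < ·)]

lemma le_of_lt_immSucc {x s z : X} (h : ImmSucc x s) (hz : z < s) : z ≤ x := by
  rcases tree_comp hz.le h.1.le with h' | h'
  · exact h'
  rcases eq_or_lt_of_le h' with rfl | h'
  · exact le_rfl
  · exact absurd (h.2 z h' hz) not_false

lemma treeHt_immSucc {x s : X} (h : ImmSucc x s) : treeHt s = treeHt x + 1 := by
  have h1 : treeHt x + 1 ≤ treeHt s := by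
    rw [Ordinal.add_one_eq_succ]
    exact Order.succ_le_of_lt (treeHt_lt_of_lt h.1)
  refine le_antisymm ?_ h1
  by_contra hc
  push_neg at hc
  have h2 : treeHt x + 1 ≤ treeHt s := h1
  obtain ⟨z, hzle, hzht⟩ := exists_le_ht s h2
  have hzs : z < s := by
    rcases eq_or_lt_of_le hzle with rfl | h'
    · exact absurd hzht hc.ne'
    · exact h'
  have hzx : z ≤ x := le_of_lt_immSucc h hzs
  have : treeHt z ≤ treeHt x := treeHt_le_of_le hzx
  rw [hzht] at this
  exact absurd this (by rw [Ordinal.add_one_eq_succ]; exact not_le.2 (Order.lt_succ _))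

lemma chain_immSucc {x y : X} (h : x < y) :
    ∃ s : X, ImmSucc x s ∧ s ≤ y ∧ treeHt s = treeHt x + 1 := by
  have hle : treeHt x + 1 ≤ treeHt y := by
    rw [Ordinal.add_one_eq_succ]; exact Order.succ_le_of_lt (treeHt_lt_of_lt h)
  refine ⟨cut y (treeHt x + 1), ⟨?_, ?_⟩, cut_le hle, treeHt_cut hle⟩
  · have hc : cut y (treeHt x + 1) ≤ y := cut_le hle
    rcases tree_comp h.le hc with h' | h'
    · rcases eq_or_lt_of_le h' with he | h'
      · exact absurd (congrArg treeHt he) (by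
          rw [treeHt_cut hle, Ordinal.add_one_eq_succ]
          exact (Order.lt_succ (treeHt x)).ne)
      · exact h'
    · exact absurd (treeHt_le_of_le h') (by
        rw [treeHt_cut hle, Ordinal.add_one_eq_succ]
        exact not_le.2 (Order.lt_succ (treeHt x)))
  · intro w hxw hws
    have h1 : treeHt x < treeHt w := treeHt_lt_of_lt hxw
    have h2 : treeHt w < treeHt x + 1 := by
      rw [← treeHt_cut hle]; exact treeHt_lt_of_lt hws
    rw [Ordinal.add_one_eq_succ, Order.lt_succ_iff] at h2
    exact absurd h1 (not_lt.2 h2)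

lemma exists_bot (X : Type) [SemilatticeInf X] [∀ t : X, IsWellOrder {x : X // x < t} (· < ·)]
    [Nonempty X] : ∃ r : X, ∀ x, r ≤ x := by
  obtain ⟨t₀⟩ := (inferInstance : Nonempty X)
  have h0 : (0 : Ordinal) ≤ treeHt t₀ := zero_le
  refine ⟨cut t₀ 0, fun x => ?_⟩
  have hr : treeHt (cut t₀ 0 : X) = 0 := treeHt_cut h0
  have hle : x ⊓ cut t₀ 0 ≤ cut t₀ 0 := inf_le_right
  have hht : treeHt (x ⊓ cut t₀ 0) = 0 := by
    have := treeHt_le_of_le hle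
    rw [hr] at this
    exact nonpos_iff_eq_zero.1 this
  have : x ⊓ cut t₀ 0 = cut t₀ 0 := eq_of_comp_ht_eq hle le_rfl (by rw [hht, hr])
  rw [← this]
  exact inf_le_left

end Succ

section Helpers
variable {X : Type} [SemilatticeInf X] [∀ t : X, IsWellOrder {x : X // x < t} (· < ·)]

lemma immSucc_of_ht {p a : X} (h1 : p < a) (h2 : treeHt a = treeHt p + 1) : ImmSucc p a := by
  refine ⟨h1, fun z hz1 hz2 => ?_⟩
  have l1 : treeHt p < treeHt z := treeHt_lt_of_lt hz1
  have l2 : treeHt z < treeHt p + 1 := h2 ▸ treeHt_lt_of_lt hz2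
  rw [Ordinal.add_one_eq_succ, Order.lt_succ_iff] at l2
  exact absurd l1 (not_lt.2 l2)

lemma lt_of_le_ht_lt {x y t : X} (hx : x ≤ t) (hy : y ≤ t) (h : treeHt x < treeHt y) :
    x < y :=
  lt_of_le_of_ne (le_of_comp_ht_le hx hy h.le) (fun he => absurd (congrArg treeHt he) h.ne)

end Helpers

section Main
variable {α : Ordinal}
variable {V : Type} [SemilatticeInf V] [∀ t : V, IsWellOrder {x : V // x < t} (· < ·)]
  [Nonempty V]
variable {T : Type} [SemilatticeInf T] [∀ t : T, IsWellOrder {x : T // x < t} (· < ·)]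

lemma ht_le_of_height_le (hh : treeHeight T ≤ α + 1) (t : T) : treeHt t ≤ α := by
  have := lt_of_lt_of_le (Ordinal.lt_lsub (fun t : T => treeHt t) t) hh
  rwa [Ordinal.add_one_eq_succ, Order.lt_succ_iff] at this

lemma climb (hVhealthy : HealthyTree V) (hVheight : treeHeight V = α + 1)
    {v : V} {γ : Ordinal} (h1 : treeHt v ≤ γ) (h2 : γ ≤ α) :
    ∃ w : V, v ≤ w ∧ treeHt w = γ := by
  obtain ⟨z, hvz, hγz⟩ := hVhealthy.2 v γ (by
    rw [hVheight, Ordinal.add_one_eq_succ, Order.lt_succ_iff]; exact h2)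
  exact ⟨cut z γ, le_of_comp_ht_le hvz (cut_le hγz) (by rw [treeHt_cut hγz]; exact h1),
    treeHt_cut hγz⟩

variable (e : ℕ → V) (M : ℕ → T)

/-- requirement `n` is handled at stage `≤ i` -/
def DoneG (g : ℕ → V) (i n : ℕ) : Prop := ∃ j ≤ i, (e n ≤ g j ∨ g j < e n)

/-- `e n` is an active requirement at stage `i` w.r.t. candidate successor `v₁` -/
def Qc (g : ℕ → V) (i n : ℕ) (v₁ : V) : Prop :=
  Order.IsSuccLimit (treeHt (e n)) ∧ ¬ DoneG e g i n ∧ v₁ < e n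

def StageProp (g a : ℕ → V) (i : ℕ) : Prop :=
  (∃ j ≤ i, M (i+1) = M j ∧ g (i+1) = g j) ∨
  (a (i+1) ≤ g (i+1) ∧ (∀ z : V, z < a (i+1) → ∃ j ≤ i, z ≤ g j) ∧
    ∀ n ≤ i, Qc e g i n (a (i+1)) → (∀ n' < n, ¬ Qc e g i n' (a (i+1))) →
      (e n ≤ g (i+1) ∨ g (i+1) < e n))

lemma stage (hTbin : BinaryOrderTree T) (hVhealthy : HealthyTree V)
    (hVheight : treeHeight V = α + 1) (hTheight : treeHeight T ≤ α + 1)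
    (hMmax : ∀ i, IsMax (M i))
    (i : ℕ) (g : ℕ → V)
    (H1 : ∀ j ≤ i, treeHt (g j) = treeHt (M j))
    (H2 : ∀ j ≤ i, ∀ k ≤ i, treeHt (g j ⊓ g k) = treeHt (M j ⊓ M k)) :
    ∃ w v₁ : V, treeHt w = treeHt (M (i+1))
      ∧ (∀ j ≤ i, treeHt (w ⊓ g j) = treeHt (M (i+1) ⊓ M j))
      ∧ ((∃ j ≤ i, M (i+1) = M j ∧ w = g j) ∨
        (v₁ ≤ w ∧ (∀ z : V, z < v₁ → ∃ j ≤ i, z ≤ g j) ∧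
          ∀ n ≤ i, Qc e g i n v₁ → (∀ n' < n, ¬ Qc e g i n' v₁) →
            (e n ≤ w ∨ w < e n))) := by
  by_cases hdeg : ∃ j ≤ i, M (i+1) = M j
  · obtain ⟨j, hj, hMe⟩ := hdeg
    refine ⟨g j, g j, by rw [H1 j hj, hMe], fun k hk => by rw [hMe]; exact H2 j hj k hk,
      Or.inl ⟨j, hj, hMe, rfl⟩⟩
  · push_neg at hdeg
    obtain ⟨j₀, hj₀mem, hj₀max⟩ := Finset.exists_max_image (Finset.range (i+1))
      (fun j => treeHt (M (i+1) ⊓ M j)) ⟨0, Finset.mem_range.2 (Nat.succ_pos i)⟩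
    rw [Finset.mem_range, Nat.lt_succ_iff] at hj₀mem
    have hj₀max' : ∀ j ≤ i, treeHt (M (i+1) ⊓ M j) ≤ treeHt (M (i+1) ⊓ M j₀) := by
      intro j hj
      exact hj₀max j (Finset.mem_range.2 (Nat.lt_succ_iff.2 hj))
    have hpM : M (i+1) ⊓ M j₀ ≤ M (i+1) := inf_le_left
    have hpj₀ : M (i+1) ⊓ M j₀ ≤ M j₀ := inf_le_right
    have hpltM : M (i+1) ⊓ M j₀ < M (i+1) := by
      rcases eq_or_lt_of_le hpM with he | h
      · exfalso
        have h1 : M (i+1) ≤ M j₀ := he ▸ hpj₀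
        exact hdeg j₀ hj₀mem (le_antisymm h1 (hMmax (i+1) h1))
      · exact h
    have hpltj₀ : M (i+1) ⊓ M j₀ < M j₀ := by
      rcases eq_or_lt_of_le hpj₀ with he | h
      · exfalso
        have h1 : M j₀ ≤ M (i+1) := he ▸ hpM
        exact hdeg j₀ hj₀mem (le_antisymm (hMmax j₀ h1) h1)
      · exact h
    set p := M (i+1) ⊓ M j₀ with hp
    have hβj₀ : treeHt p ≤ treeHt (g j₀) := by
      rw [H1 j₀ hj₀mem]; exact (treeHt_lt_of_lt hpltj₀).le
    have hPle : cut (g j₀) (treeHt p) ≤ g j₀ := cut_le hβj₀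
    have hPht : treeHt (cut (g j₀) (treeHt p)) = treeHt p := treeHt_cut hβj₀
    set P := cut (g j₀) (treeHt p) with hPdef
    have hPlt : P < g j₀ := lt_of_le_ht_lt hPle le_rfl (by
      rw [hPht, H1 j₀ hj₀mem]; exact treeHt_lt_of_lt hpltj₀)
    have hPnotmax : ¬ IsMax P := fun hmax => hPlt.ne (le_antisymm hPlt.le (hmax hPlt.le))
    obtain ⟨a, b, hab, hia, hib⟩ := hVhealthy.1 P hPnotmax
    have haht : treeHt a = treeHt p + 1 := by rw [treeHt_immSucc hia, hPht]
    have hbht : treeHt b = treeHt p + 1 := by rw [treeHt_immSucc hib, hPht]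
    have hsucc_not_le : ¬ (treeHt p + 1 ≤ treeHt p) := by
      rw [Ordinal.add_one_eq_succ]; exact not_le.2 (Order.lt_succ (treeHt p))
    -- freeness of one of the immediate successors
    have hfree : (∀ j ≤ i, ¬ a ≤ g j) ∨ (∀ j ≤ i, ¬ b ≤ g j) := by
      by_contra hcon
      push_neg at hcon
      obtain ⟨⟨ja, hja, haj⟩, ⟨jb, hjb, hbj⟩⟩ := hcon
      have key : ∀ (c : V) (jc : ℕ), jc ≤ i → ImmSucc P c → treeHt c = treeHt p + 1 →
          c ≤ g jc →
            ImmSucc p (cut (M jc) (treeHt p + 1)) ∧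
            cut (M jc) (treeHt p + 1) ≤ M jc ∧
            cut (g jc) (treeHt p + 1) = c := by
        intro c jc hjc hic hcht hcj
        have hPc : P ≤ g jc := le_trans hic.1.le hcj
        have hPm : P ≤ g jc ⊓ g j₀ := le_inf hPc hPle
        have hq : treeHt p ≤ treeHt (M jc ⊓ M j₀) := by
          rw [← H2 jc hjc j₀ hj₀mem, ← hPht]
          exact treeHt_le_of_le hPm
        have hpMjc : p ≤ M jc :=
          le_trans (le_of_comp_ht_le hpj₀ (inf_le_right : M jc ⊓ M j₀ ≤ M j₀) hq) inf_le_left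
        have hsle : treeHt p + 1 ≤ treeHt (M jc) := by
          rw [Ordinal.add_one_eq_succ]
          exact Order.succ_le_of_lt (treeHt_lt_of_lt (lt_of_le_of_ne hpMjc (fun he => by
            exact hdeg jc hjc (le_antisymm (hMmax jc (he ▸ hpM)) (he ▸ hpM)))))
        have hcut_le : cut (M jc) (treeHt p + 1) ≤ M jc := cut_le hsle
        have hcut_ht : treeHt (cut (M jc) (treeHt p + 1)) = treeHt p + 1 := treeHt_cut hsle
        refine ⟨immSucc_of_ht ?_ hcut_ht, hcut_le, ?_⟩
        · refine lt_of_le_ht_lt hpMjc hcut_le ?_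
          rw [hcut_ht, Ordinal.add_one_eq_succ]
          exact Order.lt_succ _
        · have hle2 : treeHt p + 1 ≤ treeHt (g jc) := by
            rw [← hcht]; exact treeHt_le_of_le hcj
          exact (cut_unique hle2 hcj hcht).symm
      obtain ⟨hia', hale, hca⟩ := key a ja hja hia haht haj
      obtain ⟨hib', hble, hcb⟩ := key b jb hjb hib hbht hbj
      have hsle3 : treeHt p + 1 ≤ treeHt (M (i+1)) := by
        rw [Ordinal.add_one_eq_succ]; exact Order.succ_le_of_lt (treeHt_lt_of_lt hpltM)
      have hs'le : cut (M (i+1)) (treeHt p + 1) ≤ M (i+1) := cut_le hsle3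
      have hs'ht : treeHt (cut (M (i+1)) (treeHt p + 1)) = treeHt p + 1 := treeHt_cut hsle3
      have his' : ImmSucc p (cut (M (i+1)) (treeHt p + 1)) := by
        refine immSucc_of_ht (lt_of_le_ht_lt hpM hs'le ?_) hs'ht
        rw [hs'ht, Ordinal.add_one_eq_succ]; exact Order.lt_succ _
      have hne1 : ∀ jc : ℕ, jc ≤ i → cut (M jc) (treeHt p + 1) ≤ M jc →
          cut (M (i+1)) (treeHt p + 1) ≠ cut (M jc) (treeHt p + 1) := by
        intro jc hjc hcle he
        apply hsucc_not_le
        calc treeHt p + 1 = treeHt (cut (M (i+1)) (treeHt p + 1)) := hs'ht.symm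
          _ ≤ treeHt (M (i+1) ⊓ M jc) := treeHt_le_of_le (le_inf hs'le (he ▸ hcle))
          _ ≤ treeHt p := hj₀max' jc hjc
      have hne3 : cut (M ja) (treeHt p + 1) ≠ cut (M jb) (treeHt p + 1) := by
        intro he
        have hgm : treeHt p + 1 ≤ treeHt (g ja ⊓ g jb) := by
          rw [H2 ja hja jb hjb]
          calc treeHt p + 1 = treeHt (cut (M ja) (treeHt p + 1)) :=
                (treeHt_immSucc hia').symm.trans (by rw [treeHt_immSucc hia'])
            _ ≤ treeHt (M ja ⊓ M jb) := treeHt_le_of_le (le_inf hale (he ▸ hble))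
        have hlea : treeHt p + 1 ≤ treeHt (g ja) := by
          rw [← haht]; exact treeHt_le_of_le haj
        have hleb : treeHt p + 1 ≤ treeHt (g jb) := by
          rw [← hbht]; exact treeHt_le_of_le hbj
        have e1 : cut (g ja ⊓ g jb) (treeHt p + 1) = cut (g ja) (treeHt p + 1) :=
          cut_unique hlea ((cut_le hgm).trans inf_le_left) (treeHt_cut hgm)
        have e2 : cut (g ja ⊓ g jb) (treeHt p + 1) = cut (g jb) (treeHt p + 1) :=
          cut_unique hleb ((cut_le hgm).trans inf_le_right) (treeHt_cut hgm)
        exact hab (hca ▸ hcb ▸ (e1.symm.trans e2 : _))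
      rcases hTbin p (cut (M ja) (treeHt p + 1)) (cut (M jb) (treeHt p + 1))
        (cut (M (i+1)) (treeHt p + 1)) hia' hib' his' with h | h | h
      · exact hne3 h
      · exact hne1 ja hja hale h.symm
      · exact hne1 jb hjb hble h.symm
    -- now pick the free immediate successor and the top
    have hβγ : treeHt p < treeHt (M (i+1)) := treeHt_lt_of_lt hpltM
    have hγα : treeHt (M (i+1)) ≤ α := ht_le_of_height_le hTheight _
    have main : ∀ v₁ : V, ImmSucc P v₁ → treeHt v₁ = treeHt p + 1 →
        (∀ j ≤ i, ¬ v₁ ≤ g j) →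
        ∃ w v₁' : V, treeHt w = treeHt (M (i+1))
          ∧ (∀ j ≤ i, treeHt (w ⊓ g j) = treeHt (M (i+1) ⊓ M j))
          ∧ ((∃ j ≤ i, M (i+1) = M j ∧ w = g j) ∨
            (v₁' ≤ w ∧ (∀ z : V, z < v₁' → ∃ j ≤ i, z ≤ g j) ∧
              ∀ n ≤ i, Qc e g i n v₁' → (∀ n' < n, ¬ Qc e g i n' v₁') →
                (e n ≤ w ∨ w < e n))) := by
      intro v₁ himm hv₁ht hfr
      have hv₁γ : treeHt v₁ ≤ treeHt (M (i+1)) := by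
        rw [hv₁ht, Ordinal.add_one_eq_succ]
        exact Order.succ_le_of_lt hβγ
      have hbelow : ∀ z : V, z < v₁ → ∃ j ≤ i, z ≤ g j :=
        fun z hz => ⟨j₀, hj₀mem, (le_of_lt_immSucc himm hz).trans hPle⟩
      have hP2 : ∀ w : V, v₁ ≤ w → ∀ j, j ≤ i →
          treeHt (w ⊓ g j) = treeHt (M (i+1) ⊓ M j) := by
        intro w hvw j hj
        have hd : w ⊓ g j = P ⊓ g j := by
          apply le_antisymm
          · rcases tree_comp (inf_le_left : w ⊓ g j ≤ w) hvw with hle | hle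
            · rcases eq_or_lt_of_le hle with heq | hlt
              · exact absurd (heq ▸ (inf_le_right : w ⊓ g j ≤ g j)) (hfr j hj)
              · exact le_inf (le_of_lt_immSucc himm hlt) inf_le_right
            · exact absurd (le_trans hle inf_le_right) (hfr j hj)
          · exact le_inf (le_trans (le_trans inf_le_left himm.1.le) hvw) inf_le_right
        have hMj_eq : M (i+1) ⊓ M j = p ⊓ M j := by
          apply le_antisymm
          · exact le_inf (le_of_comp_ht_le inf_le_left hpM (hj₀max' j hj)) inf_le_right
          · exact le_inf (le_trans inf_le_left hpM) inf_le_right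
        rw [hd, hMj_eq]
        -- ht (P ⊓ g j) = ht (p ⊓ M j)
        by_cases hpq : p ≤ M j₀ ⊓ M j
        · have hPq : P ≤ g j₀ ⊓ g j := by
            refine le_of_comp_ht_le hPle inf_le_left ?_
            rw [hPht, H2 j₀ hj₀mem j hj]
            exact treeHt_le_of_le hpq
          have h1 : P ⊓ g j = P := inf_eq_left.2 (hPq.trans inf_le_right)
          have h2 : p ⊓ M j = p := inf_eq_left.2 (hpq.trans inf_le_right)
          rw [h1, h2, hPht]
        · have hqp : M j₀ ⊓ M j < p := by
            rcases tree_comp (inf_le_left : M j₀ ⊓ M j ≤ M j₀) hpj₀ with h' | h'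
            · exact lt_of_le_of_ne h' (fun he => hpq (he ▸ le_rfl))
            · exact absurd h' hpq
          have h1 : P ⊓ g j = g j₀ ⊓ g j := by
            apply le_antisymm
            · exact le_inf (le_trans inf_le_left hPle) inf_le_right
            · refine le_inf (le_of_comp_ht_le inf_le_left hPle ?_) inf_le_right
              rw [hPht, H2 j₀ hj₀mem j hj]
              exact (treeHt_lt_of_lt hqp).le
          have h2 : p ⊓ M j = M j₀ ⊓ M j := by
            apply le_antisymm
            · exact le_inf (le_trans inf_le_left hpj₀) inf_le_right
            · exact le_inf hqp.le inf_le_right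
          rw [h1, h2]
          exact H2 j₀ hj₀mem j hj
      by_cases hN : ∃ n ≤ i, Qc e g i n v₁
      · classical
        have hNd : ∃ n, n ≤ i ∧ Qc e g i n v₁ := by
          obtain ⟨n, hn, hQ⟩ := hN; exact ⟨n, hn, hQ⟩
        set n₀ := Nat.find hNd with hn₀def
        obtain ⟨hn₀i, hQ₀⟩ := Nat.find_spec hNd
        have huniq : ∀ n ≤ i, Qc e g i n v₁ → (∀ n' < n, ¬ Qc e g i n' v₁) → n = n₀ := by
          intro n hn hQ hmin
          have h1 : n₀ ≤ n := Nat.find_min' hNd ⟨hn, hQ⟩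
          rcases eq_or_lt_of_le h1 with he | hlt
          · exact he.symm
          · exact absurd hQ₀ (hmin n₀ hlt)
        by_cases hgLam : treeHt (M (i+1)) < treeHt (e n₀)
        · -- block: put the top on the chain of s₀
          have hcle : cut (e n₀) (treeHt (M (i+1))) ≤ e n₀ := cut_le hgLam.le
          have hcht : treeHt (cut (e n₀) (treeHt (M (i+1)))) = treeHt (M (i+1)) :=
            treeHt_cut hgLam.le
          have hvw : v₁ ≤ cut (e n₀) (treeHt (M (i+1))) := by
            refine le_of_comp_ht_le hQ₀.2.2.le hcle ?_
            rw [hcht]; exact hv₁γ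
          refine ⟨cut (e n₀) (treeHt (M (i+1))), v₁, hcht, hP2 _ hvw,
            Or.inr ⟨hvw, hbelow, ?_⟩⟩
          intro n hn hQ hmin
          rw [huniq n hn hQ hmin]
          exact Or.inr (lt_of_le_ht_lt hcle le_rfl (by rw [hcht]; exact hgLam))
        · -- capture s₀ below the new top
          push_neg at hgLam
          obtain ⟨z, hz1, hz2⟩ := hVhealthy.2 (e n₀) (treeHt (M (i+1))) (by
            rw [hVheight, Ordinal.add_one_eq_succ, Order.lt_succ_iff]; exact hγα)
          have hcle : cut z (treeHt (M (i+1))) ≤ z := cut_le hz2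
          have hcht : treeHt (cut z (treeHt (M (i+1)))) = treeHt (M (i+1)) := treeHt_cut hz2
          have hsw : e n₀ ≤ cut z (treeHt (M (i+1))) := by
            refine le_of_comp_ht_le hz1 hcle ?_
            rw [hcht]; exact hgLam
          have hvw : v₁ ≤ cut z (treeHt (M (i+1))) := hQ₀.2.2.le.trans hsw
          refine ⟨cut z (treeHt (M (i+1))), v₁, hcht, hP2 _ hvw,
            Or.inr ⟨hvw, hbelow, ?_⟩⟩
          intro n hn hQ hmin
          rw [huniq n hn hQ hmin]
          exact Or.inl hsw
      · obtain ⟨w, hvw, hwht⟩ := climb hVhealthy hVheight hv₁γ hγα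
        refine ⟨w, v₁, hwht, hP2 w hvw, Or.inr ⟨hvw, hbelow, ?_⟩⟩
        intro n hn hQ _
        exact absurd ⟨n, hn, hQ⟩ hN
    rcases hfree with hfa | hfb
    · exact main a hia haht hfa
    · exact main b hib hbht hfb


lemma DoneG_congr {g g' : ℕ → V} {i n : ℕ} (h : ∀ j ≤ i, g' j = g j) :
    DoneG e g' i n ↔ DoneG e g i n := by
  constructor
  · rintro ⟨j, hj, hor⟩; exact ⟨j, hj, by rw [← h j hj]; exact hor⟩
  · rintro ⟨j, hj, hor⟩; exact ⟨j, hj, by rw [h j hj]; exact hor⟩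

lemma Qc_congr {g g' : ℕ → V} {i n : ℕ} (h : ∀ j ≤ i, g' j = g j) (v₁ : V) :
    Qc e g' i n v₁ ↔ Qc e g i n v₁ := by
  unfold Qc
  rw [DoneG_congr e h]

lemma StageProp_congr {g g' a a' : ℕ → V} {i' : ℕ}
    (hg : ∀ j ≤ i'+1, g' j = g j) (ha : a' (i'+1) = a (i'+1)) :
    StageProp e M g a i' → StageProp e M g' a' i' := by
  have hg' : ∀ j ≤ i', g' j = g j := fun j hj => hg j (hj.trans (Nat.le_succ i'))
  rintro (⟨j, hj, hMe, hge⟩ | ⟨h1, h2, h3⟩)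
  · exact Or.inl ⟨j, hj, hMe, by
      rw [hg (i'+1) le_rfl, hg' j hj]; exact hge⟩
  · refine Or.inr ⟨by rw [ha, hg (i'+1) le_rfl]; exact h1, ?_, ?_⟩
    · intro z hz
      obtain ⟨j, hj, hle⟩ := h2 z (ha ▸ hz)
      exact ⟨j, hj, by rw [hg' j hj]; exact hle⟩
    · intro n hn hQ hmin
      rw [ha] at hQ hmin
      rw [Qc_congr e hg'] at hQ
      have hmin' : ∀ n' < n, ¬ Qc e g i' n' (a (i'+1)) := by
        intro n' hn' hc
        exact hmin n' hn' ((Qc_congr e hg' _).2 hc)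
      rcases h3 n hn hQ hmin' with h | h
      · exact Or.inl (by rw [hg (i'+1) le_rfl]; exact h)
      · exact Or.inr (by rw [hg (i'+1) le_rfl]; exact h)

def BInv (i : ℕ) (g a : ℕ → V) : Prop :=
  (∀ j ≤ i, treeHt (g j) = treeHt (M j)) ∧
  (∀ j ≤ i, ∀ k ≤ i, treeHt (g j ⊓ g k) = treeHt (M j ⊓ M k)) ∧
  (∀ i' : ℕ, i' < i → StageProp e M g a i')

lemma step_ex (hTbin : BinaryOrderTree T) (hVhealthy : HealthyTree V)
    (hVheight : treeHeight V = α + 1) (hTheight : treeHeight T ≤ α + 1)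
    (hMmax : ∀ i, IsMax (M i))
    (i : ℕ) (g a : ℕ → V) (hInv : BInv e M i g a) :
    ∃ w v₁ : V,
      BInv e M (i+1) (Function.update g (i+1) w) (Function.update a (i+1) v₁) := by
  obtain ⟨w, v₁, hP1, hP2, hP3⟩ :=
    stage e M hTbin hVhealthy hVheight hTheight hMmax i g hInv.1 hInv.2.1
  have hupd : ∀ j ≤ i, Function.update g (i+1) w j = g j := by
    intro j hj
    exact Function.update_of_ne (by omega : j ≠ i+1) w g
  have hupd1 : ∀ j ≤ i + 1, j ≠ i + 1 → Function.update g (i+1) w j = g j := by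
    intro j _ hne
    exact Function.update_of_ne hne w g
  refine ⟨w, v₁, ?_, ?_, ?_⟩
  · intro j hj
    rcases eq_or_ne j (i+1) with rfl | hne
    · rw [Function.update_self]; exact hP1
    · rw [hupd1 j hj hne]
      exact hInv.1 j (by omega)
  · intro j hj k hk
    rcases eq_or_ne j (i+1) with rfl | hnej <;> rcases eq_or_ne k (i+1) with rfl | hnek
    · rw [Function.update_self, inf_idem, inf_idem]
      exact hP1
    · rw [Function.update_self, hupd1 k hk hnek]
      exact hP2 k (by omega)
    · rw [Function.update_self, hupd1 j hj hnej, inf_comm (g j) w,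
        inf_comm (M j) (M (i+1))]
      exact hP2 j (by omega)
    · rw [hupd1 j hj hnej, hupd1 k hk hnek]
      exact hInv.2.1 j (by omega) k (by omega)
  · intro i' hi'
    rcases eq_or_ne i' i with rfl | hne
    · -- the new stage property
      have hQeq : ∀ n, Qc e (Function.update g (i'+1) w) i' n v₁ ↔ Qc e g i' n v₁ :=
        fun n => Qc_congr e (fun j hj => hupd j hj) v₁
      rcases hP3 with ⟨j, hj, hMe, hge⟩ | ⟨h1, h2, h3⟩
      · exact Or.inl ⟨j, hj, hMe, by
          rw [Function.update_self, hupd j hj]; exact hge⟩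
      · refine Or.inr ⟨?_, ?_, ?_⟩
        · rw [Function.update_self, Function.update_self]; exact h1
        · intro z hz
          rw [Function.update_self] at hz
          obtain ⟨j, hj, hle⟩ := h2 z hz
          exact ⟨j, hj, by rw [hupd j hj]; exact hle⟩
        · intro n hn hQ hmin
          rw [Function.update_self] at hQ hmin ⊢
          rw [hQeq] at hQ
          have hmin' : ∀ n' < n, ¬ Qc e g i' n' v₁ := fun n' hn' hc =>
            hmin n' hn' ((hQeq n').2 hc)
          exact h3 n hn hQ hmin'
    · -- old stage property, transported
      have hi'' : i' < i := by omega
      refine StageProp_congr e M (g := g) (a := a) ?_ ?_ (hInv.2.2 i' hi'')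
      · intro j hj
        exact Function.update_of_ne (by omega : j ≠ i+1) w g
      · exact Function.update_of_ne (by omega : i'+1 ≠ i+1) v₁ a

lemma treeHt_eq_zero_of_bot {r : V} (h : ∀ x : V, r ≤ x) : treeHt r = 0 :=
  Ordinal.type_eq_zero_iff_isEmpty.2 ⟨fun x => absurd x.2 (h x.1).not_gt⟩

lemma base_ex (hVhealthy : HealthyTree V) (hVheight : treeHeight V = α + 1)
    (hTheight : treeHeight T ≤ α + 1) : ∃ w₀ : V, treeHt w₀ = treeHt (M 0) := by
  obtain ⟨r, hr⟩ := exists_bot V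
  obtain ⟨w, _, hw⟩ := climb hVhealthy hVheight (v := r) (γ := treeHt (M 0))
    (by rw [treeHt_eq_zero_of_bot hr]; exact zero_le)
    (ht_le_of_height_le hTheight (M 0))
  exact ⟨w, hw⟩

variable (hTbin : BinaryOrderTree T) (hVhealthy : HealthyTree V)
  (hVheight : treeHeight V = α + 1) (hTheight : treeHeight T ≤ α + 1)
  (hMmax : ∀ i, IsMax (M i))

noncomputable def Dseq : ∀ i : ℕ, {ga : (ℕ → V) × (ℕ → V) // BInv e M i ga.1 ga.2}
  | 0 =>
    ⟨(fun _ => (base_ex M hVhealthy hVheight hTheight).choose,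
      fun _ => (base_ex M hVhealthy hVheight hTheight).choose),
      ⟨fun j hj => by
        rw [Nat.le_zero] at hj
        subst hj
        exact (base_ex M hVhealthy hVheight hTheight).choose_spec,
       fun j hj k hk => by
        rw [Nat.le_zero] at hj hk
        subst hj; subst hk
        rw [inf_idem, inf_idem]
        exact (base_ex M hVhealthy hVheight hTheight).choose_spec,
       fun i' hi' => absurd hi' (Nat.not_lt_zero i')⟩⟩
  | (i+1) =>
    let prev := Dseq i
    let h := step_ex e M hTbin hVhealthy hVheight hTheight hMmax i prev.1.1 prev.1.2 prev.2
    ⟨(Function.update prev.1.1 (i+1) h.choose,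
      Function.update prev.1.2 (i+1) h.choose_spec.choose),
      h.choose_spec.choose_spec⟩

noncomputable def Wseq (i : ℕ) : V :=
  (Dseq e M hTbin hVhealthy hVheight hTheight hMmax i).1.1 i

noncomputable def Aseq (i : ℕ) : V :=
  (Dseq e M hTbin hVhealthy hVheight hTheight hMmax i).1.2 i

lemma Dseq_stable : ∀ i j, j ≤ i →
    (Dseq e M hTbin hVhealthy hVheight hTheight hMmax i).1.1 j
      = Wseq e M hTbin hVhealthy hVheight hTheight hMmax j ∧
    (Dseq e M hTbin hVhealthy hVheight hTheight hMmax i).1.2 j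
      = Aseq e M hTbin hVhealthy hVheight hTheight hMmax j := by
  intro i
  induction i with
  | zero =>
    intro j hj
    rw [Nat.le_zero] at hj
    subst hj
    exact ⟨rfl, rfl⟩
  | succ i ih =>
    intro j hj
    rcases eq_or_ne j (i+1) with rfl | hne
    · exact ⟨rfl, rfl⟩
    · have hji : j ≤ i := by omega
      constructor
      · show (Function.update _ (i+1) _ : ℕ → V) j = _
        rw [Function.update_of_ne hne]
        exact (ih j hji).1
      · show (Function.update _ (i+1) _ : ℕ → V) j = _
        rw [Function.update_of_ne hne]
        exact (ih j hji).2

lemma GH1 (j : ℕ) :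
    treeHt (Wseq e M hTbin hVhealthy hVheight hTheight hMmax j) = treeHt (M j) := by
  have h := (Dseq e M hTbin hVhealthy hVheight hTheight hMmax j).2.1 j le_rfl
  rwa [(Dseq_stable e M hTbin hVhealthy hVheight hTheight hMmax j j le_rfl).1] at h

lemma GH2 (j k : ℕ) :
    treeHt (Wseq e M hTbin hVhealthy hVheight hTheight hMmax j
      ⊓ Wseq e M hTbin hVhealthy hVheight hTheight hMmax k) = treeHt (M j ⊓ M k) := by
  have h := (Dseq e M hTbin hVhealthy hVheight hTheight hMmax (max j k)).2.2.1 j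
    (le_max_left j k) k (le_max_right j k)
  rwa [(Dseq_stable e M hTbin hVhealthy hVheight hTheight hMmax (max j k) j
      (le_max_left j k)).1,
    (Dseq_stable e M hTbin hVhealthy hVheight hTheight hMmax (max j k) k
      (le_max_right j k)).1] at h

lemma GSP (i : ℕ) :
    StageProp e M (Wseq e M hTbin hVhealthy hVheight hTheight hMmax)
      (Aseq e M hTbin hVhealthy hVheight hTheight hMmax) i := by
  refine StageProp_congr e M ?_ ?_
    ((Dseq e M hTbin hVhealthy hVheight hTheight hMmax (i+1)).2.2.2 i (Nat.lt_succ_self i))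
  · intro j hj
    exact (Dseq_stable e M hTbin hVhealthy hVheight hTheight hMmax (i+1) j hj).1.symm
  · exact (Dseq_stable e M hTbin hVhealthy hVheight hTheight hMmax (i+1) (i+1) le_rfl).2.symm

section FMap
variable (W : ℕ → V)
variable (hW1 : ∀ j, treeHt (W j) = treeHt (M j))
variable (hW2 : ∀ j k, treeHt (W j ⊓ W k) = treeHt (M j ⊓ M k))
variable (hMcov : ∀ x : T, ∃ i, x ≤ M i)

noncomputable def fmap (x : T) : V := cut (W (hMcov x).choose) (treeHt x)

include hW1 hW2

lemma ht_le_W {x : T} {j : ℕ} (hx : x ≤ M j) : treeHt x ≤ treeHt (W j) := by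
  rw [hW1 j]; exact treeHt_le_of_le hx

lemma fmap_eq (x : T) (j : ℕ) (hx : x ≤ M j) :
    fmap M W hMcov x = cut (W j) (treeHt x) := by
  set j' := (hMcov x).choose with hj'
  have hx' : x ≤ M j' := (hMcov x).choose_spec
  have hm : treeHt x ≤ treeHt (W j ⊓ W j') := by
    rw [hW2 j j']
    exact treeHt_le_of_le (le_inf hx hx')
  have h1 : cut (W j ⊓ W j') (treeHt x) = cut (W j) (treeHt x) :=
    cut_unique (ht_le_W M W hW1 hW2 hx) ((cut_le hm).trans inf_le_left) (treeHt_cut hm)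
  have h2 : cut (W j ⊓ W j') (treeHt x) = cut (W j') (treeHt x) :=
    cut_unique (ht_le_W M W hW1 hW2 hx') ((cut_le hm).trans inf_le_right) (treeHt_cut hm)
  rw [fmap, ← h1, h2]

lemma fmap_le {x : T} {j : ℕ} (hx : x ≤ M j) : fmap M W hMcov x ≤ W j := by
  rw [fmap_eq M W hW1 hW2 hMcov x j hx]
  exact cut_le (ht_le_W M W hW1 hW2 hx)

lemma fmap_ht (x : T) : treeHt (fmap M W hMcov x) = treeHt x :=
  treeHt_cut (ht_le_W M W hW1 hW2 (hMcov x).choose_spec)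

lemma fmap_le_iff (x y : T) : fmap M W hMcov x ≤ fmap M W hMcov y ↔ x ≤ y := by
  constructor
  · intro h
    set jx := (hMcov x).choose with hjx
    set jy := (hMcov y).choose with hjy
    have hxM : x ≤ M jx := (hMcov x).choose_spec
    have hyM : y ≤ M jy := (hMcov y).choose_spec
    have h1 : fmap M W hMcov x ≤ W jx ⊓ W jy :=
      le_inf (fmap_le M W hW1 hW2 hMcov hxM) (h.trans (fmap_le M W hW1 hW2 hMcov hyM))
    have h2 : treeHt x ≤ treeHt (M jx ⊓ M jy) := by
      rw [← hW2 jx jy, ← fmap_ht M W hW1 hW2 hMcov x]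
      exact treeHt_le_of_le h1
    have h3 : x ≤ M jy :=
      (le_of_comp_ht_le hxM (inf_le_left : M jx ⊓ M jy ≤ M jx) h2).trans inf_le_right
    refine le_of_comp_ht_le h3 hyM ?_
    rw [← fmap_ht M W hW1 hW2 hMcov x, ← fmap_ht M W hW1 hW2 hMcov y]
    exact treeHt_le_of_le h
  · intro h
    have hy : y ≤ M (hMcov y).choose := (hMcov y).choose_spec
    rw [fmap_eq M W hW1 hW2 hMcov x _ (h.trans hy), fmap_eq M W hW1 hW2 hMcov y _ hy]
    refine le_of_comp_ht_le (cut_le (ht_le_W M W hW1 hW2 (h.trans hy)))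
      (cut_le (ht_le_W M W hW1 hW2 hy)) ?_
    rw [treeHt_cut (ht_le_W M W hW1 hW2 (h.trans hy)), treeHt_cut (ht_le_W M W hW1 hW2 hy)]
    exact treeHt_le_of_le h

lemma fmap_inf (x y : T) :
    fmap M W hMcov (x ⊓ y) = fmap M W hMcov x ⊓ fmap M W hMcov y := by
  by_cases hxy : x ≤ y
  · rw [inf_eq_left.2 hxy, inf_eq_left.2 ((fmap_le_iff M W hW1 hW2 hMcov x y).2 hxy)]
  by_cases hyx : y ≤ x
  · rw [inf_eq_right.2 hyx, inf_eq_right.2 ((fmap_le_iff M W hW1 hW2 hMcov y x).2 hyx)]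
  -- incomparable case
  set jx := (hMcov x).choose with hjx
  set jy := (hMcov y).choose with hjy
  have hxM : x ≤ M jx := (hMcov x).choose_spec
  have hyM : y ≤ M jy := (hMcov y).choose_spec
  have hnotxp : ¬ x ≤ M jx ⊓ M jy := by
    intro h
    rcases tree_comp (h.trans (inf_le_right : M jx ⊓ M jy ≤ M jy)) hyM with h' | h'
    · exact hxy h'
    · exact hyx h'
  have hnotyp : ¬ y ≤ M jx ⊓ M jy := by
    intro h
    rcases tree_comp (h.trans (inf_le_left : M jx ⊓ M jy ≤ M jx)) hxM with h' | h'
    · exact hyx h'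
    · exact hxy h'
  have hpx : M jx ⊓ M jy < x := by
    rcases tree_comp (inf_le_left : M jx ⊓ M jy ≤ M jx) hxM with h | h
    · exact lt_of_le_of_ne h (fun he => hnotxp (he ▸ le_rfl))
    · exact absurd h hnotxp
  have hpy : M jx ⊓ M jy < y := by
    rcases tree_comp (inf_le_right : M jx ⊓ M jy ≤ M jy) hyM with h | h
    · exact lt_of_le_of_ne h (fun he => hnotyp (he ▸ le_rfl))
    · exact absurd h hnotyp
  have hxyp : x ⊓ y = M jx ⊓ M jy :=
    le_antisymm (le_inf ((inf_le_left : x ⊓ y ≤ x).trans hxM)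
      ((inf_le_right : x ⊓ y ≤ y).trans hyM)) (le_inf hpx.le hpy.le)
  have hPx : W jx ⊓ W jy ≤ fmap M W hMcov x := by
    refine le_of_comp_ht_le (inf_le_left : W jx ⊓ W jy ≤ W jx)
      (fmap_le M W hW1 hW2 hMcov hxM) ?_
    rw [hW2 jx jy, fmap_ht M W hW1 hW2 hMcov x]
    exact (treeHt_lt_of_lt hpx).le
  have hPy : W jx ⊓ W jy ≤ fmap M W hMcov y := by
    refine le_of_comp_ht_le (inf_le_right : W jx ⊓ W jy ≤ W jy)
      (fmap_le M W hW1 hW2 hMcov hyM) ?_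
    rw [hW2 jx jy, fmap_ht M W hW1 hW2 hMcov y]
    exact (treeHt_lt_of_lt hpy).le
  have hPmeet : fmap M W hMcov x ⊓ fmap M W hMcov y = W jx ⊓ W jy :=
    le_antisymm (le_inf ((inf_le_left).trans (fmap_le M W hW1 hW2 hMcov hxM))
      ((inf_le_right).trans (fmap_le M W hW1 hW2 hMcov hyM))) (le_inf hPx hPy)
  have hfp : fmap M W hMcov (x ⊓ y) = W jx ⊓ W jy := by
    rw [hxyp, fmap_eq M W hW1 hW2 hMcov _ jx ((inf_le_left : M jx ⊓ M jy ≤ M jx))]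
    refine (cut_unique (ht_le_W M W hW1 hW2 (inf_le_left : M jx ⊓ M jy ≤ M jx))
      (inf_le_left : W jx ⊓ W jy ≤ W jx) (hW2 jx jy)).symm
  rw [hfp, hPmeet]

lemma fmap_mem_range_iff (v : V) :
    v ∈ Set.range (fmap M W hMcov) ↔ ∃ j, v ≤ W j := by
  constructor
  · rintro ⟨x, rfl⟩
    exact ⟨(hMcov x).choose, cut_le (ht_le_W M W hW1 hW2 (hMcov x).choose_spec)⟩
  · rintro ⟨j, hv⟩
    have hvh : treeHt v ≤ treeHt (M j) := by
      rw [← hW1 j]; exact treeHt_le_of_le hv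
    refine ⟨cut (M j) (treeHt v), ?_⟩
    rw [fmap_eq M W hW1 hW2 hMcov _ j (cut_le hvh), treeHt_cut hvh]
    exact (cut_unique (by rw [hW1 j]; exact hvh) hv rfl).symm

lemma fmap_W (j : ℕ) : fmap M W hMcov (M j) = W j := by
  rw [fmap_eq M W hW1 hW2 hMcov _ j le_rfl]
  exact (cut_unique (le_of_eq (hW1 j).symm) le_rfl (hW1 j)).symm

end FMap

section Closed
variable (W A : ℕ → V)
variable (hW1 : ∀ j, treeHt (W j) = treeHt (M j))
variable (hW2 : ∀ j k, treeHt (W j ⊓ W k) = treeHt (M j ⊓ M k))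
variable (hMcov : ∀ x : T, ∃ i, x ≤ M i)
variable (hMmax : ∀ i, IsMax (M i))
variable (hSP : ∀ i, StageProp e M W A i)
variable (he : Function.Surjective e)

include hW1 hW2 hMcov hMmax hSP he

lemma closed_range (C : Set V) (hC : C ⊆ {v | ∃ j, v ≤ W j}) (s : V) (hlub : IsLUB C s) :
    ∃ j, s ≤ W j := by
  by_contra hs
  push_neg at hs
  rcases Set.eq_empty_or_nonempty C with rfl | ⟨c₀, hc₀⟩
  · exact hs 0 (hlub.2 (fun c hc => absurd hc (Set.notMem_empty c)))
  by_cases hsC : s ∈ C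
  · obtain ⟨j, hj⟩ := hC hsC
    exact hs j hj
  have hclt : ∀ c ∈ C, c < s :=
    fun c hc => lt_of_le_of_ne (hlub.1 hc) (fun he' => hsC (he' ▸ hc))
  have hcof : ∀ x : V, x < s → ∃ c ∈ C, x ≤ c := by
    intro x hx
    by_contra hcon
    push_neg at hcon
    have hub : x ∈ upperBounds C := by
      intro c hc
      rcases tree_comp (hclt c hc).le hx.le with h | h
      · exact h
      · exact absurd h (hcon c hc)
    exact absurd (hlub.2 hub) hx.not_ge
  have hpreds : ∀ x : V, x < s → ∃ j, x ≤ W j := by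
    intro x hx
    obtain ⟨c, hc, hxc⟩ := hcof x hx
    obtain ⟨j, hj⟩ := hC hc
    exact ⟨j, hxc.trans hj⟩
  have hnomax : ∀ x : V, x < s → ∃ y : V, x < y ∧ y < s := by
    intro x hx
    have hnub : ¬ x ∈ upperBounds C := fun h => absurd (hlub.2 h) hx.not_ge
    rw [mem_upperBounds] at hnub
    push_neg at hnub
    obtain ⟨c, hc, hcx⟩ := hnub
    rcases tree_comp hx.le (hclt c hc).le with h | h
    · exact ⟨c, lt_of_le_of_ne h (fun he' => hcx (he' ▸ le_rfl)), hclt c hc⟩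
    · exact absurd h hcx
  have hlim : Order.IsSuccLimit (treeHt s) := by
    rw [Ordinal.isSuccLimit_iff]
    constructor
    · exact pos_iff_ne_zero.1
        (lt_of_le_of_lt zero_le (treeHt_lt_of_lt (hclt c₀ hc₀)))
    · apply Order.isSuccPrelimit_of_succ_lt
      intro β hβ
      have hx : cut s β ≤ s := cut_le hβ.le
      have hxht : treeHt (cut s β) = β := treeHt_cut hβ.le
      have hxs : cut s β < s := lt_of_le_ht_lt hx le_rfl (by rw [hxht]; exact hβ)
      obtain ⟨y, hy1, hy2⟩ := hnomax _ hxs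
      have h1 : Order.succ β ≤ treeHt y := Order.succ_le_of_lt (hxht ▸ treeHt_lt_of_lt hy1)
      exact lt_of_le_of_lt h1 (treeHt_lt_of_lt hy2)
  have hsjlt : ∀ j, W j ⊓ s < s := fun j =>
    lt_of_le_of_ne inf_le_right (fun he' => hs j (inf_eq_right.1 he'))
  have hcov : ∀ β, β < treeHt s → ∃ j, β < treeHt (W j ⊓ s) := by
    intro β hβ
    have hb1 : Order.succ β < treeHt s := hlim.succ_lt hβ
    have hx : cut s (Order.succ β) ≤ s := cut_le hb1.le
    have hxht : treeHt (cut s (Order.succ β)) = Order.succ β := treeHt_cut hb1.le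
    have hxs : cut s (Order.succ β) < s := lt_of_le_ht_lt hx le_rfl (by rw [hxht]; exact hb1)
    obtain ⟨j, hj⟩ := hpreds _ hxs
    refine ⟨j, lt_of_lt_of_le (Order.lt_succ β) ?_⟩
    rw [← hxht]
    exact treeHt_le_of_le (le_inf hj hx)
  have hWlt : ∀ j, ¬ W j < s := by
    intro j hWj
    have hb1 : Order.succ (treeHt (W j)) < treeHt s := hlim.succ_lt (treeHt_lt_of_lt hWj)
    have hx : cut s (Order.succ (treeHt (W j))) ≤ s := cut_le hb1.le
    have hxht : treeHt (cut s (Order.succ (treeHt (W j)))) = Order.succ (treeHt (W j)) :=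
      treeHt_cut hb1.le
    have hxs : cut s (Order.succ (treeHt (W j))) < s :=
      lt_of_le_ht_lt hx le_rfl (by rw [hxht]; exact hb1)
    obtain ⟨k, hk⟩ := hpreds _ hxs
    have hjk : W j < W k := by
      refine lt_of_lt_of_le ?_ hk
      refine lt_of_le_ht_lt hWj.le hx ?_
      rw [hxht]
      exact Order.lt_succ _
    have hMeq : M j = M k := by
      have h1 : treeHt (M j ⊓ M k) = treeHt (M j) := by
        rw [← hW2 j k, inf_eq_left.2 hjk.le, hW1 j]
      have h2 : M j ⊓ M k = M j :=
        eq_of_comp_ht_eq (inf_le_left : M j ⊓ M k ≤ M j) le_rfl h1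
      have h3 : M j ≤ M k := h2 ▸ (inf_le_right : M j ⊓ M k ≤ M k)
      exact le_antisymm h3 (hMmax j h3)
    have : W j = W k := by
      rw [← fmap_W M W hW1 hW2 hMcov j, ← fmap_W M W hW1 hW2 hMcov k, hMeq]
    exact absurd (this ▸ hjk) (lt_irrefl (W k))
  obtain ⟨n, hn⟩ := he s
  have hNever : ∀ i, ¬ DoneG e W i n := by
    rintro i ⟨j, hj, hor | hor⟩
    · rw [hn] at hor
      exact hs j hor
    · rw [hn] at hor
      exact hWlt j hor
  -- record stages exist beyond any bound
  have hrec : ∀ i₀ : ℕ, ∃ i ≥ i₀, ∀ j ≤ i, treeHt (W j ⊓ s) < treeHt (W (i+1) ⊓ s) := by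
    intro i₀
    obtain ⟨jm, hjm_mem, hjm⟩ := Finset.exists_max_image (Finset.range (i₀+1))
      (fun j => treeHt (W j ⊓ s)) ⟨0, Finset.mem_range.2 (Nat.succ_pos i₀)⟩
    have hB : treeHt (W jm ⊓ s) < treeHt s := treeHt_lt_of_lt (hsjlt jm)
    obtain ⟨k', hk'⟩ := hcov _ hB
    classical
    have hex : ∃ k, treeHt (W jm ⊓ s) < treeHt (W k ⊓ s) := ⟨k', hk'⟩
    set k₀ := Nat.find hex with hk₀def
    have hk₀ : treeHt (W jm ⊓ s) < treeHt (W k₀ ⊓ s) := Nat.find_spec hex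
    have hk₀min : ∀ j < k₀, ¬ treeHt (W jm ⊓ s) < treeHt (W j ⊓ s) :=
      fun j hj => Nat.find_min hex hj
    have hk₀gt : i₀ < k₀ := by
      by_contra hle
      push_neg at hle
      exact absurd hk₀ (not_lt.2 (hjm k₀ (Finset.mem_range.2 (Nat.lt_succ_of_le hle))))
    refine ⟨k₀ - 1, by omega, ?_⟩
    have hk : k₀ - 1 + 1 = k₀ := by omega
    rw [hk]
    intro j hj
    have hj' : j < k₀ := by omega
    exact lt_of_le_of_lt (not_lt.1 (hk₀min j hj')) hk₀
  -- at each record stage past n, a new requirement index ≤ n becomes Done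
  have hstage : ∀ i, n ≤ i → (∀ j ≤ i, treeHt (W j ⊓ s) < treeHt (W (i+1) ⊓ s)) →
      ∃ n₀ ≤ n, ¬ DoneG e W i n₀ ∧ DoneG e W (i+1) n₀ := by
    intro i hni hrc
    rcases hSP i with ⟨j, hj, _, hge⟩ | ⟨h1, h2, h3⟩
    · exfalso
      have := hrc j hj
      rw [hge] at this
      exact lt_irrefl _ this
    · have hv₁s : A (i+1) < s := by
        rcases tree_comp h1 (inf_le_left : W (i+1) ⊓ s ≤ W (i+1)) with h | h
        · exact lt_of_le_of_lt h (hsjlt (i+1))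
        · rcases eq_or_lt_of_le h with heq | hlt
          · exact lt_of_le_of_lt heq.ge (hsjlt (i+1))
          · exfalso
            obtain ⟨j, hj, hle⟩ := h2 _ hlt
            have h4 : W (i+1) ⊓ s ≤ W j ⊓ s := le_inf hle inf_le_right
            exact absurd (treeHt_le_of_le h4) (not_le.2 (hrc j hj))
      have hQn : Qc e W i n (A (i+1)) := ⟨by rw [hn]; exact hlim, hNever i, by rw [hn]; exact hv₁s⟩
      classical
      have hex : ∃ n', n' ≤ i ∧ Qc e W i n' (A (i+1)) := ⟨n, hni, hQn⟩
      set n₀ := Nat.find hex with hn₀def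
      obtain ⟨hn₀i, hQ₀⟩ := Nat.find_spec hex
      have hmin : ∀ n' < n₀, ¬ Qc e W i n' (A (i+1)) := by
        intro n' hn' hQ'
        exact absurd ⟨(by omega : n' ≤ i), hQ'⟩ (Nat.find_min hex hn')
      have hdone := h3 n₀ hn₀i hQ₀ hmin
      exact ⟨n₀, Nat.find_min' hex ⟨hni, hQn⟩, hQ₀.2.1, ⟨i+1, le_rfl, hdone⟩⟩
  -- DoneG is monotone
  have hmono : ∀ n₀ i i', i ≤ i' → DoneG e W i n₀ → DoneG e W i' n₀ := by
    rintro n₀ i i' hii ⟨j, hj, hor⟩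
    exact ⟨j, hj.trans hii, hor⟩
  -- pigeonhole
  classical
  have hcard : ∀ m : ℕ, ∃ i, m ≤ ((Finset.range (n+1)).filter (fun n₀ => DoneG e W i n₀)).card := by
    intro m
    induction m with
    | zero => exact ⟨0, Nat.zero_le _⟩
    | succ m ih =>
      obtain ⟨i, hi⟩ := ih
      obtain ⟨i', hi'ge, hrc⟩ := hrec (max i n)
      obtain ⟨n₀, hn₀n, hnot, hdone⟩ := hstage i' (le_trans (le_max_right i n) hi'ge) hrc
      refine ⟨i' + 1, ?_⟩
      have hsub : (Finset.range (n+1)).filter (fun n₀ => DoneG e W i n₀) ⊆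
          (Finset.range (n+1)).filter (fun n₀ => DoneG e W i' n₀) := by
        intro x hx
        rw [Finset.mem_filter] at hx ⊢
        exact ⟨hx.1, hmono x i i' (le_trans (le_max_left i n) hi'ge) hx.2⟩
      have hsub2 : insert n₀ ((Finset.range (n+1)).filter (fun n₀ => DoneG e W i' n₀)) ⊆
          (Finset.range (n+1)).filter (fun n₀ => DoneG e W (i'+1) n₀) := by
        intro x hx
        rw [Finset.mem_insert] at hx
        rcases hx with rfl | hx
        · rw [Finset.mem_filter]
          exact ⟨Finset.mem_range.2 (by omega), hdone⟩
        · rw [Finset.mem_filter] at hx ⊢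
          exact ⟨hx.1, hmono x i' (i'+1) (Nat.le_succ i') hx.2⟩
      have hn₀notmem : n₀ ∉ (Finset.range (n+1)).filter (fun n₀ => DoneG e W i' n₀) := by
        rw [Finset.mem_filter]
        rintro ⟨_, hd⟩
        exact hnot hd
      calc m + 1 ≤ ((Finset.range (n+1)).filter (fun n₀ => DoneG e W i n₀)).card + 1 := by omega
        _ ≤ ((Finset.range (n+1)).filter (fun n₀ => DoneG e W i' n₀)).card + 1 := by
            have := Finset.card_le_card hsub
            omega
        _ = (insert n₀ ((Finset.range (n+1)).filter (fun n₀ => DoneG e W i' n₀))).card := by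
            rw [Finset.card_insert_of_notMem hn₀notmem]
        _ ≤ _ := Finset.card_le_card hsub2
  obtain ⟨i, hi⟩ := hcard (n+2)
  have : ((Finset.range (n+1)).filter (fun n₀ => DoneG e W i n₀)).card ≤ n + 1 := by
    calc _ ≤ (Finset.range (n+1)).card := Finset.card_filter_le _ _
      _ = n + 1 := Finset.card_range _
  omega

end Closed
end Main


theorem embeds_into_healthy_tree (α : Ordinal) (hα : α.card ≤ Cardinal.aleph0)
    (V : Type) [SemilatticeInf V] [∀ t : V, IsWellOrder {x : V // x < t} (· < ·)]
    [Nonempty V] [Countable V]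
    (hVbin : BinaryOrderTree V) (hVbd : BoundedTree V) (hVheight : treeHeight V = α + 1)
    (hVhealthy : HealthyTree V)
    (T : Type) [SemilatticeInf T] [∀ t : T, IsWellOrder {x : T // x < t} (· < ·)]
    [Nonempty T] [Countable T]
    (hTbin : BinaryOrderTree T) (hTbd : BoundedTree T) (hTheight : treeHeight T ≤ α + 1) :
    ∃ f : T → V, InfEmbedding f ∧ ClosedInitialSegment (Set.range f) := by
  classical
  obtain ⟨e, he⟩ := exists_surjective_nat V
  have hnemax : Nonempty {t : T // IsMax t} := by
    obtain ⟨t, _, hmax⟩ := hTbd (Classical.arbitrary T)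
    exact ⟨⟨t, hmax⟩⟩
  obtain ⟨F, hF⟩ := exists_surjective_nat {t : T // IsMax t}
  set M : ℕ → T := fun i => (F i).1 with hM
  have hMmax : ∀ i, IsMax (M i) := fun i => (F i).2
  have hMcov : ∀ x : T, ∃ i, x ≤ M i := by
    intro x
    obtain ⟨t, hxt, hmax⟩ := hTbd x
    obtain ⟨i, hFi⟩ := hF ⟨t, hmax⟩
    refine ⟨i, ?_⟩
    have : M i = t := by rw [hM]; simp only []; rw [hFi]
    rw [this]
    exact hxt
  set W := Wseq e M hTbin hVhealthy hVheight hTheight hMmax with hWdef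
  set A := Aseq e M hTbin hVhealthy hVheight hTheight hMmax with hAdef
  have hW1 : ∀ j, treeHt (W j) = treeHt (M j) :=
    GH1 e M hTbin hVhealthy hVheight hTheight hMmax
  have hW2 : ∀ j k, treeHt (W j ⊓ W k) = treeHt (M j ⊓ M k) :=
    GH2 e M hTbin hVhealthy hVheight hTheight hMmax
  have hSP : ∀ i, StageProp e M W A i :=
    GSP e M hTbin hVhealthy hVheight hTheight hMmax
  have hrange : ∀ v, v ∈ Set.range (fmap M W hMcov) ↔ ∃ j, v ≤ W j :=
    fmap_mem_range_iff M W hW1 hW2 hMcov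
  refine ⟨fmap M W hMcov,
    ⟨fmap_le_iff M W hW1 hW2 hMcov, fmap_inf M W hW1 hW2 hMcov⟩, ?_, ?_⟩
  · intro a b hba ha
    obtain ⟨j, hj⟩ := (hrange a).1 ha
    exact (hrange b).2 ⟨j, hba.trans hj⟩
  · intro C hC hchain s hlub
    have hC' : C ⊆ {v | ∃ j, v ≤ W j} := fun c hc => (hrange c).1 (hC hc)
    obtain ⟨j, hj⟩ := closed_range e M hMmax W A hW1 hW2 hMcov hSP he C hC' s hlub
    exact (hrange s).2 ⟨j, hj⟩
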